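/- Among all orthonormal families {ψ_1,…,ψ_ℓ} in ℝ^n, the first ℓ left singular vectors of the snapshot matrix Y minimize the functional Σ_{j=1}^m ‖y_j − Σ_{i=1}^ℓ ⟨y_j, ψ_i⟩ ψ_i‖², i.e. for every orthonormal family {φ_1,…,φ_ℓ}, Σ_j ‖y_j − Σ_i ⟨y_j, φ_i⟩ φ_i‖² ≥ Σ_{i=ℓ+1}^r σ_i². -/

import Mathlib

open Matrix Finset

/-- Orthonormal expansion: sum over outer index of squared linear combination. -/
lemma sum_sq_expand {m r : ℕ} (V : Fin m → Fin r → ℝ)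
    (hVo : ∀ i i' : Fin r, (∑ j : Fin m, V j i * V j i') = if i = i' then 1 else 0)
    (d : Fin r → ℝ) :
    ∑ j : Fin m, (∑ i : Fin r, d i * V j i) ^ 2 = ∑ i : Fin r, d i ^ 2 := by
  have h1 : ∀ j, (∑ i : Fin r, d i * V j i) ^ 2
      = ∑ i : Fin r, ∑ i' : Fin r, (d i * d i') * (V j i * V j i') := by
    intro j
    rw [sq, Finset.sum_mul_sum]
    refine Finset.sum_congr rfl fun i _ => Finset.sum_congr rfl fun i' _ => by ring
  calc ∑ j : Fin m, (∑ i : Fin r, d i * V j i) ^ 2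
      = ∑ j : Fin m, ∑ i : Fin r, ∑ i' : Fin r, (d i * d i') * (V j i * V j i') := by
        simp only [h1]
    _ = ∑ i : Fin r, ∑ i' : Fin r, (d i * d i') * ∑ j : Fin m, V j i * V j i' := by
        rw [Finset.sum_comm]
        refine Finset.sum_congr rfl fun i _ => ?_
        rw [Finset.sum_comm]
        exact Finset.sum_congr rfl fun i' _ => (Finset.mul_sum _ _ _).symm
    _ = ∑ i : Fin r, d i ^ 2 := by
        simp only [hVo, mul_ite, mul_one, mul_zero]
        simp [sq]

/-- Projection error expansion for an orthonormal family. -/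
lemma expand_proj {n l : ℕ} (y : Fin n → ℝ) (φ : Fin l → Fin n → ℝ)
    (hortho : ∀ i j : Fin l, (∑ a : Fin n, φ i a * φ j a) = if i = j then 1 else 0) :
    ∑ a : Fin n, (y a - ∑ k : Fin l, (∑ b : Fin n, y b * φ k b) * φ k a) ^ 2
      = (∑ a : Fin n, y a ^ 2) - ∑ k : Fin l, (∑ b : Fin n, y b * φ k b) ^ 2 := by
  set g : Fin l → ℝ := fun k => ∑ b : Fin n, y b * φ k b with hg
  have hs : ∑ a : Fin n, (∑ k : Fin l, g k * φ k a) ^ 2 = ∑ k : Fin l, g k ^ 2 :=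
    sum_sq_expand (fun a k => φ k a) (fun i i' => hortho i i') g
  have hcross : ∑ a : Fin n, y a * (∑ k : Fin l, g k * φ k a) = ∑ k : Fin l, g k ^ 2 := by
    calc ∑ a : Fin n, y a * (∑ k : Fin l, g k * φ k a)
        = ∑ a : Fin n, ∑ k : Fin l, g k * (y a * φ k a) := by
          refine Finset.sum_congr rfl fun a _ => ?_
          rw [Finset.mul_sum]
          exact Finset.sum_congr rfl fun k _ => by ring
      _ = ∑ k : Fin l, g k * ∑ a : Fin n, y a * φ k a := by
          rw [Finset.sum_comm]
          exact Finset.sum_congr rfl fun k _ => (Finset.mul_sum _ _ _).symm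
      _ = ∑ k : Fin l, g k ^ 2 := by
          refine Finset.sum_congr rfl fun k _ => ?_
          rw [hg, sq]
  calc ∑ a : Fin n, (y a - ∑ k : Fin l, g k * φ k a) ^ 2
      = ∑ a : Fin n, (y a ^ 2 - 2 * (y a * (∑ k : Fin l, g k * φ k a))
          + (∑ k : Fin l, g k * φ k a) ^ 2) := by
        refine Finset.sum_congr rfl fun a _ => by ring
    _ = (∑ a : Fin n, y a ^ 2) - 2 * (∑ a : Fin n, y a * (∑ k : Fin l, g k * φ k a))
          + ∑ a : Fin n, (∑ k : Fin l, g k * φ k a) ^ 2 := by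
        rw [Finset.sum_add_distrib, Finset.sum_sub_distrib, Finset.mul_sum]
    _ = (∑ a : Fin n, y a ^ 2) - ∑ k : Fin l, g k ^ 2 := by
        rw [hcross, hs]; ring

/-- Bessel inequality for an orthonormal family. -/
lemma coeff_sq_le {n l : ℕ} (y : Fin n → ℝ) (φ : Fin l → Fin n → ℝ)
    (hortho : ∀ i j : Fin l, (∑ a : Fin n, φ i a * φ j a) = if i = j then 1 else 0)
    (hy : (∑ a : Fin n, y a ^ 2) = 1) :
    (∑ k : Fin l, (∑ b : Fin n, y b * φ k b) ^ 2) ≤ 1 := by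
  have h := expand_proj y φ hortho
  have h0 : 0 ≤ ∑ a : Fin n, (y a - ∑ k : Fin l, (∑ b : Fin n, y b * φ k b) * φ k a) ^ 2 :=
    Finset.sum_nonneg fun a _ => sq_nonneg _
  rw [h, hy] at h0
  linarith

/-- The compl of the tail filter has cardinality ℓ. -/
lemma card_head {r ℓ : ℕ} (hℓ : ℓ ≤ r) :
    ((Finset.univ.filter (fun k : Fin r => ℓ ≤ (k : ℕ)))ᶜ).card = ℓ := by
  have him : (Finset.univ.filter (fun k : Fin r => ℓ ≤ (k : ℕ)))ᶜ
      = Finset.image (Fin.castLE hℓ) Finset.univ := by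
    ext i
    simp only [Finset.mem_compl, Finset.mem_filter, Finset.mem_univ, true_and, not_le,
      Finset.mem_image]
    constructor
    · intro h
      exact ⟨⟨(i : ℕ), h⟩, by ext; rfl⟩
    · rintro ⟨a, rfl⟩
      exact a.isLt
  rw [him, Finset.card_image_of_injective _ (Fin.castLE_injective hℓ)]
  simp

/-- Final rearrangement-type inequality. -/
lemma final_ineq {r : ℕ} (σ t : Fin r → ℝ) (hσ : ∀ i, 0 ≤ σ i)
    (hmono : ∀ i j : Fin r, i ≤ j → σ j ≤ σ i)
    (ht0 : ∀ i, 0 ≤ t i) (ht1 : ∀ i, t i ≤ 1)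
    (ℓ : ℕ) (hℓ : ℓ ≤ r) (htsum : (∑ i : Fin r, t i) ≤ (ℓ : ℝ)) :
    (∑ k ∈ Finset.univ.filter (fun k : Fin r => ℓ ≤ (k : ℕ)), σ k ^ 2)
      ≤ (∑ i : Fin r, σ i ^ 2) - ∑ i : Fin r, σ i ^ 2 * t i := by
  classical
  set S : Finset (Fin r) := Finset.univ.filter (fun k : Fin r => ℓ ≤ (k : ℕ)) with hS
  have hsplit : (∑ i : Fin r, σ i ^ 2) - (∑ i : Fin r, σ i ^ 2 * t i)
      = ∑ i : Fin r, σ i ^ 2 * (1 - t i) := by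
    rw [← Finset.sum_sub_distrib]
    exact Finset.sum_congr rfl fun i _ => by ring
  rw [hsplit]
  have hnn : ∀ i, 0 ≤ σ i ^ 2 * (1 - t i) := fun i =>
    mul_nonneg (sq_nonneg _) (by linarith [ht1 i])
  have key : ∑ i ∈ S, σ i ^ 2 * t i ≤ ∑ i ∈ Sᶜ, σ i ^ 2 * (1 - t i) := by
    rcases eq_or_lt_of_le hℓ with heq | hlt
    · have hSempty : S = ∅ := by
        subst heq
        ext i
        simp [hS, Nat.not_le.mpr i.isLt]
      rw [hSempty]
      simp only [Finset.sum_empty]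
      exact Finset.sum_nonneg fun i _ => hnn i
    · set L : Fin r := ⟨ℓ, hlt⟩ with hL
      have hmemS : ∀ i ∈ S, L ≤ i := by
        intro i hi
        rw [hS, Finset.mem_filter] at hi
        exact hi.2
      have hmemSc : ∀ i ∈ Sᶜ, i ≤ L := by
        intro i hi
        rw [Finset.mem_compl, hS, Finset.mem_filter] at hi
        have : ¬ ℓ ≤ (i : ℕ) := fun h => hi ⟨Finset.mem_univ _, h⟩
        exact le_of_lt (Nat.lt_of_not_le this)
      have hcard : (Sᶜ).card = ℓ := card_head hℓ
      have hsum1 : ∑ i ∈ S, t i + ∑ i ∈ Sᶜ, t i = ∑ i : Fin r, t i :=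
        Finset.sum_add_sum_compl S t
      have hstep : ∑ i ∈ S, t i ≤ ∑ i ∈ Sᶜ, (1 - t i) := by
        rw [Finset.sum_sub_distrib, Finset.sum_const, hcard, nsmul_eq_mul, mul_one]
        linarith
      calc ∑ i ∈ S, σ i ^ 2 * t i
          ≤ ∑ i ∈ S, σ L ^ 2 * t i := by
            refine Finset.sum_le_sum fun i hi => ?_
            exact mul_le_mul_of_nonneg_right
              (pow_le_pow_left₀ (hσ i) (hmono L i (hmemS i hi)) 2) (ht0 i)
        _ = σ L ^ 2 * ∑ i ∈ S, t i := (Finset.mul_sum _ _ _).symm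
        _ ≤ σ L ^ 2 * ∑ i ∈ Sᶜ, (1 - t i) :=
            mul_le_mul_of_nonneg_left hstep (sq_nonneg _)
        _ = ∑ i ∈ Sᶜ, σ L ^ 2 * (1 - t i) := Finset.mul_sum _ _ _
        _ ≤ ∑ i ∈ Sᶜ, σ i ^ 2 * (1 - t i) := by
            refine Finset.sum_le_sum fun i hi => ?_
            exact mul_le_mul_of_nonneg_right
              (pow_le_pow_left₀ (hσ L) (hmono i L (hmemSc i hi)) 2)
              (by linarith [ht1 i])
  calc ∑ k ∈ S, σ k ^ 2
      = ∑ k ∈ S, (σ k ^ 2 * (1 - t k) + σ k ^ 2 * t k) :=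
        Finset.sum_congr rfl fun i _ => by ring
    _ = ∑ k ∈ S, σ k ^ 2 * (1 - t k) + ∑ k ∈ S, σ k ^ 2 * t k :=
        Finset.sum_add_distrib
    _ ≤ ∑ k ∈ S, σ k ^ 2 * (1 - t k) + ∑ k ∈ Sᶜ, σ k ^ 2 * (1 - t k) := by linarith
    _ = ∑ i : Fin r, σ i ^ 2 * (1 - t i) := Finset.sum_add_sum_compl S _

/-- POD optimality: every orthonormal family of ℓ vectors gives projection
error at least the sum of the squares of the neglected singular values. -/
theorem pod_optimality {n m r : ℕ} (Y : Matrix (Fin n) (Fin m) ℝ)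
    (Ψ : Matrix (Fin n) (Fin r) ℝ) (σ : Fin r → ℝ) (V : Matrix (Fin m) (Fin r) ℝ)
    (hrank : Y.rank = r)
    (hsvd : Y = Ψ * Matrix.diagonal σ * Vᵀ)
    (hΨ : Ψᵀ * Ψ = 1) (hV : Vᵀ * V = 1)
    (hσpos : ∀ i, 0 < σ i) (hσmono : ∀ i j : Fin r, i ≤ j → σ j ≤ σ i)
    (ℓ : ℕ) (hℓ : ℓ ≤ r)
    (φ : Fin ℓ → Fin n → ℝ)
    (hortho : ∀ i j : Fin ℓ, (∑ a : Fin n, φ i a * φ j a) = if i = j then 1 else 0) :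
    ∑ j : Fin m, ∑ i : Fin n,
        (Y i j - ∑ k : Fin ℓ, (∑ i' : Fin n, Y i' j * φ k i') * φ k i) ^ 2
      ≥ ∑ k ∈ Finset.univ.filter (fun k : Fin r => ℓ ≤ (k : ℕ)), σ k ^ 2 := by
  classical
  -- entrywise orthonormality facts
  have hΨo : ∀ i i' : Fin r, (∑ a : Fin n, Ψ a i * Ψ a i') = if i = i' then 1 else 0 := by
    intro i i'
    have h := congrFun (congrFun hΨ i) i'
    simpa [Matrix.mul_apply, Matrix.transpose_apply, Matrix.one_apply] using h
  have hVo : ∀ i i' : Fin r, (∑ j : Fin m, V j i * V j i') = if i = i' then 1 else 0 := by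
    intro i i'
    have h := congrFun (congrFun hV i) i'
    simpa [Matrix.mul_apply, Matrix.transpose_apply, Matrix.one_apply] using h
  have hY : ∀ (a : Fin n) (j : Fin m), Y a j = ∑ i : Fin r, Ψ a i * σ i * V j i := by
    intro a j
    rw [hsvd, Matrix.mul_assoc]
    simp only [Matrix.mul_apply, Matrix.transpose_apply]
    refine Finset.sum_congr rfl fun i _ => ?_
    rw [show (∑ x : Fin r, Matrix.diagonal σ i x * V j x) = σ i * V j i by
      simp [Matrix.diagonal_apply, ite_mul, zero_mul, Finset.sum_ite_eq]]
    ring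
  set c : Fin ℓ → Fin r → ℝ := fun k i => ∑ a : Fin n, φ k a * Ψ a i with hc
  set t : Fin r → ℝ := fun i => ∑ k : Fin ℓ, c k i ^ 2 with ht
  -- coefficient identity
  have hgid : ∀ (k : Fin ℓ) (j : Fin m),
      (∑ a : Fin n, Y a j * φ k a) = ∑ i : Fin r, (σ i * c k i) * V j i := by
    intro k j
    calc ∑ a : Fin n, Y a j * φ k a
        = ∑ a : Fin n, ∑ i : Fin r, (σ i * V j i) * (φ k a * Ψ a i) := by
          refine Finset.sum_congr rfl fun a _ => ?_
          rw [hY a j, Finset.sum_mul]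
          exact Finset.sum_congr rfl fun i _ => by ring
      _ = ∑ i : Fin r, (σ i * V j i) * ∑ a : Fin n, φ k a * Ψ a i := by
          rw [Finset.sum_comm]
          exact Finset.sum_congr rfl fun i _ => (Finset.mul_sum _ _ _).symm
      _ = ∑ i : Fin r, (σ i * c k i) * V j i := by
          refine Finset.sum_congr rfl fun i _ => ?_
          rw [hc]
          ring
  -- Frobenius norm of Y
  have hB : (∑ j : Fin m, ∑ a : Fin n, Y a j ^ 2) = ∑ i : Fin r, σ i ^ 2 := by
    rw [Finset.sum_comm]
    calc ∑ a : Fin n, ∑ j : Fin m, Y a j ^ 2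
        = ∑ a : Fin n, ∑ i : Fin r, (Ψ a i * σ i) ^ 2 := by
          refine Finset.sum_congr rfl fun a _ => ?_
          calc ∑ j : Fin m, Y a j ^ 2
              = ∑ j : Fin m, (∑ i : Fin r, (Ψ a i * σ i) * V j i) ^ 2 := by
                simp only [hY]
            _ = ∑ i : Fin r, (Ψ a i * σ i) ^ 2 := sum_sq_expand V hVo _
      _ = ∑ i : Fin r, σ i ^ 2 * ∑ a : Fin n, Ψ a i * Ψ a i := by
          rw [Finset.sum_comm]
          refine Finset.sum_congr rfl fun i _ => ?_
          rw [Finset.mul_sum]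
          exact Finset.sum_congr rfl fun a _ => by ring
      _ = ∑ i : Fin r, σ i ^ 2 := by simp [hΨo]
  -- projected energy
  have hC : ∀ k : Fin ℓ,
      (∑ j : Fin m, (∑ a : Fin n, Y a j * φ k a) ^ 2) = ∑ i : Fin r, σ i ^ 2 * c k i ^ 2 := by
    intro k
    simp only [hgid]
    rw [sum_sq_expand V hVo]
    exact Finset.sum_congr rfl fun i _ => by ring
  -- main reduction
  have hmain : (∑ j : Fin m, ∑ i : Fin n,
        (Y i j - ∑ k : Fin ℓ, (∑ i' : Fin n, Y i' j * φ k i') * φ k i) ^ 2)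
      = (∑ i : Fin r, σ i ^ 2) - ∑ i : Fin r, σ i ^ 2 * t i := by
    calc ∑ j : Fin m, ∑ i : Fin n,
          (Y i j - ∑ k : Fin ℓ, (∑ i' : Fin n, Y i' j * φ k i') * φ k i) ^ 2
        = ∑ j : Fin m, ((∑ a : Fin n, Y a j ^ 2)
            - ∑ k : Fin ℓ, (∑ b : Fin n, Y b j * φ k b) ^ 2) := by
          refine Finset.sum_congr rfl fun j _ => ?_
          exact expand_proj (fun a => Y a j) φ hortho
      _ = (∑ j : Fin m, ∑ a : Fin n, Y a j ^ 2)
            - ∑ j : Fin m, ∑ k : Fin ℓ, (∑ b : Fin n, Y b j * φ k b) ^ 2 :=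
          Finset.sum_sub_distrib _ _
      _ = (∑ i : Fin r, σ i ^ 2) - ∑ i : Fin r, σ i ^ 2 * t i := by
          rw [hB]
          congr 1
          rw [Finset.sum_comm]
          calc ∑ k : Fin ℓ, ∑ j : Fin m, (∑ b : Fin n, Y b j * φ k b) ^ 2
              = ∑ k : Fin ℓ, ∑ i : Fin r, σ i ^ 2 * c k i ^ 2 :=
                Finset.sum_congr rfl fun k _ => hC k
            _ = ∑ i : Fin r, σ i ^ 2 * t i := by
                rw [Finset.sum_comm]
                refine Finset.sum_congr rfl fun i _ => ?_
                rw [ht, ← Finset.mul_sum]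
  -- Bessel bounds
  have ht1 : ∀ i : Fin r, t i ≤ 1 := by
    intro i
    have hy : ∑ a : Fin n, Ψ a i ^ 2 = 1 := by
      have h1 : (∑ a : Fin n, Ψ a i * Ψ a i) = 1 := by simpa using hΨo i i
      rw [← h1]
      exact Finset.sum_congr rfl fun a _ => pow_two _
    have hb := coeff_sq_le (fun a => Ψ a i) φ hortho hy
    have heq : ∀ k : Fin ℓ, (∑ b : Fin n, Ψ b i * φ k b) = c k i := by
      intro k
      rw [hc]
      exact Finset.sum_congr rfl fun a _ => mul_comm _ _
    calc t i = ∑ k : Fin ℓ, (∑ b : Fin n, Ψ b i * φ k b) ^ 2 := by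
          rw [ht]
          exact (Finset.sum_congr rfl fun k _ => by rw [heq k]).symm
      _ ≤ 1 := hb
  have ht0 : ∀ i : Fin r, 0 ≤ t i := by
    intro i
    rw [ht]
    exact Finset.sum_nonneg fun k _ => sq_nonneg _
  have hrow : ∀ k : Fin ℓ, (∑ i : Fin r, c k i ^ 2) ≤ 1 := by
    intro k
    have hy : ∑ a : Fin n, φ k a ^ 2 = 1 := by
      have h1 : (∑ a : Fin n, φ k a * φ k a) = 1 := by simpa using hortho k k
      rw [← h1]
      exact Finset.sum_congr rfl fun a _ => pow_two _
    have hb := coeff_sq_le (φ k) (fun i a => Ψ a i) hΨo hy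
    calc ∑ i : Fin r, c k i ^ 2
        = ∑ i : Fin r, (∑ b : Fin n, φ k b * Ψ b i) ^ 2 := by
          refine Finset.sum_congr rfl fun i _ => ?_
          rw [hc]
      _ ≤ 1 := hb
  have htsum : (∑ i : Fin r, t i) ≤ (ℓ : ℝ) := by
    calc ∑ i : Fin r, t i
        = ∑ k : Fin ℓ, ∑ i : Fin r, c k i ^ 2 := by
          show (∑ i : Fin r, ∑ k : Fin ℓ, c k i ^ 2) = _
          exact Finset.sum_comm
      _ ≤ ∑ k : Fin ℓ, (1 : ℝ) := Finset.sum_le_sum fun k _ => hrow k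
      _ = (ℓ : ℝ) := by simp
  rw [ge_iff_le, hmain]
  exact final_ineq σ t (fun i => (hσpos i).le) hσmono ht0 ht1 ℓ hℓ htsum
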